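/- Let α₁ ≤ β₁ and α₂ ≤ β₂ be reals with β₁ − α₁ < π and β₂ − α₂ < π, and let A, B ∈ Matrix (Fin n) (Fin n) ℂ satisfy star x ⬝ᵥ A.mulVec x ∈ S[α₁,β₁] and star x ⬝ᵥ B.mulVec x ∈ S[α₂,β₂] for every unit vector x ∈ EuclideanSpace ℂ (Fin n). Then every eigenvalue λ ∈ spectrum ℂ (A * B) is nonzero and lies in the sector S[α₁ + α₂, β₁ + β₂]. -/

import Mathlib

open Matrix
open scoped Real

/-- The sector of complex numbers with phase in `[α, β]`. -/
def sector (α β : ℝ) : Set ℂ :=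
  {z : ℂ | ∃ r > (0 : ℝ), ∃ θ ∈ Set.Icc α β, z = (r : ℂ) * Complex.exp ((θ : ℂ) * Complex.I)}

lemma sector_ne_zero {α β : ℝ} {z : ℂ} (h : z ∈ sector α β) : z ≠ 0 := by
  obtain ⟨r, hr, θ, hθ, rfl⟩ := h
  exact mul_ne_zero (by exact_mod_cast hr.ne') (Complex.exp_ne_zero _)

lemma sector_smul {α β : ℝ} {z : ℂ} {r : ℝ} (hr : 0 < r) (h : z ∈ sector α β) :
    (r : ℂ) * z ∈ sector α β := by
  obtain ⟨s, hs, θ, hθ, rfl⟩ := h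
  exact ⟨r * s, mul_pos hr hs, θ, hθ, by push_cast; ring⟩

lemma sector_mul {α₁ β₁ α₂ β₂ : ℝ} {z w : ℂ} (hz : z ∈ sector α₁ β₁)
    (hw : w ∈ sector α₂ β₂) : z * w ∈ sector (α₁ + α₂) (β₁ + β₂) := by
  obtain ⟨r, hr, θ, hθ, rfl⟩ := hz
  obtain ⟨s, hs, φ, hφ, rfl⟩ := hw
  refine ⟨r * s, mul_pos hr hs, θ + φ, ⟨add_le_add hθ.1 hφ.1, add_le_add hθ.2 hφ.2⟩, ?_⟩
  push_cast
  rw [add_mul, Complex.exp_add]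
  ring

lemma quad_mem {n : ℕ} {α β : ℝ} {M : Matrix (Fin n) (Fin n) ℂ}
    (hM : ∀ x : EuclideanSpace ℂ (Fin n), ‖x‖ = 1 → star x ⬝ᵥ M.mulVec x ∈ sector α β)
    (v : EuclideanSpace ℂ (Fin n)) (hv : v ≠ 0) :
    star v ⬝ᵥ M.mulVec v ∈ sector α β := by
  have hnv : 0 < ‖v‖ := norm_pos_iff.mpr hv
  set c : ℂ := ((‖v‖⁻¹ : ℝ) : ℂ) with hc
  have hx : ‖(c • v : EuclideanSpace ℂ (Fin n))‖ = 1 := by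
    rw [norm_smul, hc]
    simp [abs_of_pos (inv_pos.mpr hnv), inv_mul_cancel₀ hnv.ne']
  have h := hM (c • v) hx
  have key : star (c • v : EuclideanSpace ℂ (Fin n)) ⬝ᵥ M.mulVec (c • v : EuclideanSpace ℂ (Fin n)) =
      (star c * c) * (star v ⬝ᵥ M.mulVec v) := by
    show star (c • (v : Fin n → ℂ)) ⬝ᵥ M.mulVec (c • (v : Fin n → ℂ)) = _
    rw [star_smul, Matrix.mulVec_smul, smul_dotProduct, dotProduct_smul]
    simp [smul_eq_mul]; ring
  rw [key] at h
  have hcc : star c * c = ((‖v‖⁻¹ * ‖v‖⁻¹ : ℝ) : ℂ) := by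
    rw [hc]; push_cast; simp [Complex.conj_ofReal]
  have hone : ((‖v‖ * ‖v‖ : ℝ) : ℂ) * (star c * c) = 1 := by
    rw [hcc, ← Complex.ofReal_mul]
    norm_cast
    field_simp
  have : star v ⬝ᵥ M.mulVec v = ((‖v‖ * ‖v‖ : ℝ) : ℂ) * ((star c * c) * (star v ⬝ᵥ M.mulVec v)) := by
    rw [← mul_assoc, hone, one_mul]
  rw [this]
  exact sector_smul (mul_pos hnv hnv) h

/-- If the numerical ranges of `A` and `B` lie in sectors of angular width less than `π`,
then every eigenvalue of `A * B` is nonzero and lies in the sum sector. -/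
theorem spectrum_mul_mem_sector {n : ℕ} (α₁ β₁ α₂ β₂ : ℝ)
    (h₁ : α₁ ≤ β₁) (h₂ : α₂ ≤ β₂) (hw₁ : β₁ - α₁ < π) (hw₂ : β₂ - α₂ < π)
    (A B : Matrix (Fin n) (Fin n) ℂ)
    (hA : ∀ x : EuclideanSpace ℂ (Fin n), ‖x‖ = 1 → star x ⬝ᵥ A.mulVec x ∈ sector α₁ β₁)
    (hB : ∀ x : EuclideanSpace ℂ (Fin n), ‖x‖ = 1 → star x ⬝ᵥ B.mulVec x ∈ sector α₂ β₂) :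
    ∀ lam ∈ spectrum ℂ (A * B), lam ≠ 0 ∧ lam ∈ sector (α₁ + α₂) (β₁ + β₂) := by
  intro lam hlam
  rw [spectrum.mem_iff] at hlam
  have hdet : (algebraMap ℂ (Matrix (Fin n) (Fin n) ℂ) lam - A * B).det = 0 := by
    by_contra h
    exact hlam ((Matrix.isUnit_iff_isUnit_det _).mpr (isUnit_iff_ne_zero.mpr h))
  obtain ⟨v, hv0, hv⟩ := (Matrix.exists_mulVec_eq_zero_iff).mpr hdet
  have hABv : (A * B).mulVec v = lam • v := by
    have h' := hv
    rw [Matrix.sub_mulVec, sub_eq_zero] at h'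
    rw [← h', Algebra.algebraMap_eq_smul_one, Matrix.smul_mulVec, Matrix.one_mulVec]
  -- view v as a EuclideanSpace vector
  have hb : star v ⬝ᵥ B.mulVec v ∈ sector α₂ β₂ :=
    quad_mem hB (WithLp.toLp 2 v) (fun h => hv0 (congrArg WithLp.ofLp h))
  set b := star v ⬝ᵥ B.mulVec v with hbdef
  set w : EuclideanSpace ℂ (Fin n) := WithLp.toLp 2 (B.mulVec v) with hwdef
  have hw0 : w ≠ 0 := by
    intro h
    apply sector_ne_zero hb
    rw [hbdef]
    show star v ⬝ᵥ (w : Fin n → ℂ) = 0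
    rw [h]
    simp [dotProduct_zero]
  have ha : star w ⬝ᵥ A.mulVec w ∈ sector α₁ β₁ := quad_mem hA w hw0
  set a := star w ⬝ᵥ A.mulVec w with hadef
  have hAw : A.mulVec w = lam • v := by
    rw [hwdef]
    show A.mulVec (B.mulVec v) = lam • v
    rw [Matrix.mulVec_mulVec, hABv]
  have hab : a = lam * (starRingEnd ℂ) b := by
    rw [hadef, hAw, dotProduct_smul, smul_eq_mul]
    congr 1
    rw [hbdef]
    show star (w : Fin n → ℂ) ⬝ᵥ v = (starRingEnd ℂ) (star v ⬝ᵥ (w : Fin n → ℂ))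
    simp [dotProduct, map_sum, mul_comm]
  have hbne : b ≠ 0 := sector_ne_zero hb
  have hane : a ≠ 0 := sector_ne_zero ha
  have hlamne : lam ≠ 0 := by
    intro h; rw [h, zero_mul] at hab; exact hane hab
  refine ⟨hlamne, ?_⟩
  have hnsq : (0 : ℝ) < Complex.normSq b := Complex.normSq_pos.mpr hbne
  have hlameq : lam = (((Complex.normSq b)⁻¹ : ℝ) : ℂ) * (a * b) := by
    have h1 : (starRingEnd ℂ) b * b = (Complex.normSq b : ℂ) := by
      rw [mul_comm]; exact Complex.mul_conj b
    rw [hab, mul_assoc lam, h1, mul_comm lam, ← mul_assoc, ← Complex.ofReal_mul,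
      inv_mul_cancel₀ hnsq.ne', Complex.ofReal_one, one_mul]
  rw [hlameq]
  exact sector_smul (inv_pos.mpr hnsq) (sector_mul ha hb)
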